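/- Let K be a nilpotent group of class three, let y₁, …, y_m be elements of K which generate K modulo Z(K), and assume that y_i^(2^(r_i)) ∈ Z(K) for each i, where 1 ≤ r₁ ≤ ⋯ ≤ r_(m-1) ≤ r_m. If there exist integers γ_i with 0 ≤ γ_i < r_(m-1) for i = 1, …, m-1 such that [y_m, y_i]^(2^(γ_i)) commutes with both y_i and y_m, then y_m^(2^(r_(m-1))) ∈ Z(K). -/

import Mathlib

/-- The paper's commutator convention: `[x,y] = x⁻¹y⁻¹xy`. -/
def pcomm {G : Type*} [Group G] (x y : G) : G := x⁻¹ * y⁻¹ * x * y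

section Helpers
open scoped commutatorElement
variable {K : Type*} [Group K]

lemma pcomm_eq_commutator (x y : K) : pcomm x y = ⁅x⁻¹, y⁻¹⁆ := by
  simp [pcomm, commutatorElement_def]

lemma pcomm_eq_one_of_commute {x y : K} (h : Commute x y) : pcomm x y = 1 := by
  rw [pcomm_eq_commutator, commutatorElement_eq_one_iff_commute]
  exact h.inv_inv

lemma commute_of_conj_eq {x y : K} (h : y⁻¹ * x * y = x) : Commute x y := by
  have : x * y = y * x := by
    calc x * y = y * (y⁻¹ * x * y) := by group
    _ = y * x := by rw [h]
  exact this

/-- Triple `pcomm`s are central in groups of class at most `3`. -/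
lemma pcomm_pcomm_central {KK : Type*} [Group KK]
    (hclass3 : Subgroup.lowerCentralSeries (⊤ : Subgroup KK) 3 = ⊥) (a b x : KK) :
    pcomm (pcomm a b) x ∈ Subgroup.center KK := by
  have h1 : pcomm a b ∈ Subgroup.lowerCentralSeries (⊤ : Subgroup KK) 1 := by
    rw [pcomm_eq_commutator, Subgroup.top_lowerCentralSeries_one]
    exact Subgroup.commutator_mem_commutator (Subgroup.mem_top _) (Subgroup.mem_top _)
  have h2 : pcomm (pcomm a b) x ∈ Subgroup.lowerCentralSeries (⊤ : Subgroup KK) 2 := by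
    rw [pcomm_eq_commutator]
    show _ ∈ ⁅Subgroup.lowerCentralSeries (⊤ : Subgroup KK) 1, (⊤ : Subgroup KK)⁆
    exact Subgroup.commutator_mem_commutator ((Subgroup.lowerCentralSeries (⊤ : Subgroup KK) 1).inv_mem h1)
      (Subgroup.mem_top _)
  rw [Subgroup.mem_center_iff]
  intro g
  have h3 : ⁅pcomm (pcomm a b) x, g⁆ ∈ Subgroup.lowerCentralSeries (⊤ : Subgroup KK) 3 := by
    show _ ∈ ⁅Subgroup.lowerCentralSeries (⊤ : Subgroup KK) 2, (⊤ : Subgroup KK)⁆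
    exact Subgroup.commutator_mem_commutator h2 (Subgroup.mem_top _)
  rw [hclass3, Subgroup.mem_bot, commutatorElement_eq_one_iff_commute] at h3
  exact h3.symm.eq

lemma pow_swap {a c e : K} (he : ∀ g : K, Commute e g) (h : c * a = a * c * e) :
    ∀ n : ℕ, c ^ n * a = a * c ^ n * e ^ n := by
  intro n
  induction n with
  | zero => simp
  | succ n ih =>
    calc c ^ (n + 1) * a = c ^ n * (c * a) := by rw [pow_succ, mul_assoc]
    _ = c ^ n * (a * c * e) := by rw [h]
    _ = (c ^ n * a) * c * e := by group
    _ = (a * c ^ n * e ^ n) * c * e := by rw [ih]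
    _ = a * c ^ n * (e ^ n * c) * e := by group
    _ = a * c ^ n * (c * e ^ n) * e := by rw [((he c).pow_left n).eq]
    _ = a * c ^ (n + 1) * e ^ (n + 1) := by rw [pow_succ, pow_succ]; group

lemma prod_pow_formula {a c e : K} (he : ∀ g : K, Commute e g) (h : c * a = a * c * e) :
    ∀ n : ℕ, (a * c) ^ n = a ^ n * c ^ n * e ^ (n.choose 2) := by
  intro n
  induction n with
  | zero => simp
  | succ n ih =>
    calc (a * c) ^ (n + 1) = (a * c) ^ n * (a * c) := by rw [pow_succ]
    _ = a ^ n * c ^ n * e ^ n.choose 2 * (a * c) := by rw [ih]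
    _ = a ^ n * c ^ n * (e ^ n.choose 2 * a) * c := by group
    _ = a ^ n * c ^ n * (a * e ^ n.choose 2) * c := by rw [((he a).pow_left (n.choose 2)).eq]
    _ = a ^ n * (c ^ n * a) * (e ^ n.choose 2 * c) := by group
    _ = a ^ n * (c ^ n * a) * (c * e ^ n.choose 2) := by rw [((he c).pow_left (n.choose 2)).eq]
    _ = a ^ n * (a * c ^ n * e ^ n) * (c * e ^ n.choose 2) := by rw [pow_swap he h n]
    _ = a ^ (n + 1) * c ^ n * (e ^ n * c) * e ^ n.choose 2 := by rw [pow_succ']; group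
    _ = a ^ (n + 1) * c ^ n * (c * e ^ n) * e ^ n.choose 2 := by rw [((he c).pow_left n).eq]
    _ = a ^ (n + 1) * c ^ (n + 1) * (e ^ n * e ^ n.choose 2) := by rw [pow_succ c]; group
    _ = a ^ (n + 1) * c ^ (n + 1) * e ^ ((n + 1).choose 2) := by
        rw [← pow_add]
        congr 1
        rw [Nat.choose_succ_succ, Nat.choose_one_right, Nat.add_comm]

lemma conj_pow_formula {a b : K}
    (he : ∀ g : K, Commute (pcomm (pcomm a b) a) g) (n : ℕ) :
    b⁻¹ * a ^ n * b = a ^ n * (pcomm a b) ^ n * (pcomm (pcomm a b) a) ^ (n.choose 2) := by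
  have h1 : b⁻¹ * a * b = a * pcomm a b := by unfold pcomm; group
  have h2 : pcomm a b * a = a * pcomm a b * pcomm (pcomm a b) a := by unfold pcomm; group
  calc b⁻¹ * a ^ n * b = (b⁻¹ * a * b⁻¹⁻¹) ^ n := by rw [conj_pow]; group
  _ = (a * pcomm a b) ^ n := by rw [inv_inv, h1]
  _ = _ := prod_pow_formula he h2 n

lemma pcomm_pow_left {c x : K} (hp : ∀ g : K, Commute (pcomm c x) g) (k : ℕ) :
    pcomm (c ^ k) x = (pcomm c x) ^ k := by
  have h : c * x = x * c * pcomm c x := by unfold pcomm; group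
  have hs := pow_swap hp h k
  calc pcomm (c ^ k) x = (c ^ k)⁻¹ * x⁻¹ * (c ^ k * x) := by unfold pcomm; group
  _ = (c ^ k)⁻¹ * x⁻¹ * (x * c ^ k * (pcomm c x) ^ k) := by rw [hs]
  _ = (pcomm c x) ^ k := by group

lemma choose_two_pow {s : ℕ} (hs : 1 ≤ s) : (2 ^ s).choose 2 = 2 ^ (s - 1) * (2 ^ s - 1) := by
  rw [Nat.choose_two_right]
  have h2 : 2 ^ s = 2 * 2 ^ (s - 1) := by
    conv_lhs => rw [show s = (s - 1) + 1 by omega]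
    rw [pow_succ]; ring
  rw [h2, mul_assoc, Nat.mul_div_cancel_left _ two_pos]

lemma pow_eq_one_of_dvd {p : K} {d N : ℕ} (h1 : p ^ d = 1) (hd : d ∣ N) : p ^ N = 1 := by
  obtain ⟨k, rfl⟩ := hd
  rw [pow_mul, h1, one_pow]

end Helpers

/-- Let `K` be a nilpotent group of class three, let `y₁, …, y_m` generate `K`
modulo its center, with `y i ^ (2 ^ r i)` central and `1 ≤ r₁ ≤ ⋯ ≤ r_m`.
If there are `γ i` with `0 ≤ γ i < r_{m-1}` (for `i = 1, …, m-1`) such that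
`[y_m, y_i] ^ (2 ^ γ i)` commutes with `y_i` and with `y_m`, then
`y_m ^ (2 ^ r_{m-1})` is central. -/
theorem central_power_of_commutator_condition {K : Type*} [Group K] {m : ℕ}
    (hm : 1 < m)
    (hclass3 : Subgroup.lowerCentralSeries (⊤ : Subgroup K) 3 = ⊥)
    (y : Fin m → K) (r : Fin m → ℕ)
    (hgen : Subgroup.closure
      (Set.range fun i => (QuotientGroup.mk (y i) : K ⧸ Subgroup.center K)) = ⊤)
    (hr : ∀ i, 1 ≤ r i) (hmono : Monotone r)
    (hcent : ∀ i, y i ^ 2 ^ r i ∈ Subgroup.center K)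
    (γ : Fin m → ℕ)
    (hγ : ∀ i : Fin m, (i : ℕ) < m - 1 →
      γ i < r ⟨m - 2, by omega⟩ ∧
      Commute (pcomm (y ⟨m - 1, by omega⟩) (y i) ^ 2 ^ γ i) (y i) ∧
      Commute (pcomm (y ⟨m - 1, by omega⟩) (y i) ^ 2 ^ γ i) (y ⟨m - 1, by omega⟩)) :
    y ⟨m - 1, by omega⟩ ^ 2 ^ r ⟨m - 2, by omega⟩ ∈ Subgroup.center K := by
  set a := y ⟨m - 1, by omega⟩ with ha
  set ρ := r ⟨m - 2, by omega⟩ with hρ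
  have hρ1 : 1 ≤ ρ := hr _
  have central_commute : ∀ {z : K}, z ∈ Subgroup.center K → ∀ g : K, Commute z g :=
    fun hz g => ((Subgroup.mem_center_iff.1 hz) g).symm
  have key : ∀ i : Fin m, Commute (a ^ 2 ^ ρ) (y i) := by
    intro i
    by_cases hi : (i : ℕ) < m - 1
    · obtain ⟨hγlt, hcb, hca⟩ := hγ i hi
      set b := y i with hb
      set c := pcomm a b with hc
      have hri : r i ≤ ρ := hmono (show i ≤ ⟨m - 2, by omega⟩ from by
        simp [Fin.le_def]; omega)
      have hri1 : 1 ≤ r i := hr i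
      -- centrality of the relevant triple pcomms
      have hqcen : ∀ g : K, Commute (pcomm c a) g :=
        fun g => central_commute (pcomm_pcomm_central hclass3 a b a) g
      have hfcen : ∀ g : K, Commute (pcomm (pcomm b a) b) g :=
        fun g => central_commute (pcomm_pcomm_central hclass3 b a b) g
      -- pcomm b a = c⁻¹
      have hc' : pcomm b a = c⁻¹ := by rw [hc]; unfold pcomm; group
      -- f := pcomm (pcomm b a) b satisfies f ^ 2 ^ γ i = 1
      have hf1 : (pcomm (pcomm b a) b) ^ 2 ^ γ i = 1 := by
        rw [← pcomm_pow_left hfcen]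
        apply pcomm_eq_one_of_commute
        rw [hc', inv_pow]
        exact hcb.inv_left
      -- q := pcomm c a satisfies q ^ 2 ^ γ i = 1
      have hq1 : (pcomm c a) ^ 2 ^ γ i = 1 := by
        rw [← pcomm_pow_left hqcen]
        exact pcomm_eq_one_of_commute hca
      -- conjugation by a fixes the central element b ^ 2 ^ r i
      have hbM : a⁻¹ * b ^ 2 ^ r i * a = b ^ 2 ^ r i := by
        have h : b ^ 2 ^ r i * a = a * b ^ 2 ^ r i := (central_commute (hcent i) a).eq
        rw [mul_assoc, h]
        group
      have hconjb := conj_pow_formula (a := b) (b := a) hfcen (2 ^ r i)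
      have h0 : (pcomm b a) ^ 2 ^ r i * (pcomm (pcomm b a) b) ^ ((2 ^ r i).choose 2) = 1 := by
        have h0' : b ^ 2 ^ r i *
            ((pcomm b a) ^ 2 ^ r i * (pcomm (pcomm b a) b) ^ ((2 ^ r i).choose 2)) =
            b ^ 2 ^ r i * 1 := by
          rw [mul_one, ← mul_assoc, ← hconjb, hbM]
        exact mul_left_cancel h0'
      rw [hc', inv_pow, inv_mul_eq_one] at h0
      -- h0 : c ^ 2 ^ r i = f ^ choose
      have hcρ : c ^ 2 ^ ρ = 1 := by
        have hsplit : c ^ 2 ^ ρ = (c ^ 2 ^ r i) ^ 2 ^ (ρ - r i) := by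
          rw [← pow_mul, ← pow_add, Nat.add_sub_cancel' hri]
        rw [hsplit, h0, ← pow_mul]
        rw [hc'] at hf1
        refine pow_eq_one_of_dvd hf1 ?_
        rw [choose_two_pow hri1]
        calc (2:ℕ) ^ γ i ∣ 2 ^ (ρ - 1) := pow_dvd_pow 2 (by omega)
        _ ∣ 2 ^ (r i - 1) * (2 ^ r i - 1) * 2 ^ (ρ - r i) := by
            refine ⟨2 ^ r i - 1, ?_⟩
            rw [show (2:ℕ) ^ (ρ - 1) = 2 ^ (r i - 1) * 2 ^ (ρ - r i) from by
              rw [← pow_add]; congr 1; omega]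
            ring
      have hq2 : (pcomm c a) ^ ((2 ^ ρ).choose 2) = 1 := by
        refine pow_eq_one_of_dvd hq1 ?_
        rw [choose_two_pow hρ1]
        exact Dvd.dvd.mul_right (pow_dvd_pow 2 (by omega)) _
      have hfin : b⁻¹ * a ^ 2 ^ ρ * b = a ^ 2 ^ ρ := by
        rw [conj_pow_formula hqcen (2 ^ ρ), ← hc, hcρ, hq2, mul_one, mul_one]
      exact commute_of_conj_eq hfin
    · have hieq : i = ⟨m - 1, by omega⟩ := Fin.ext (by simp; omega)
      rw [hieq, ← ha]
      exact (Commute.refl a).pow_left _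
  -- from key, the power is central
  have hker : (QuotientGroup.mk' (Subgroup.center K)).ker ≤
      Subgroup.centralizer {a ^ 2 ^ ρ} := by
    rw [QuotientGroup.ker_mk']
    intro g hg
    exact Subgroup.mem_centralizer_iff.mpr fun h hh => by
      rw [Set.mem_singleton_iff] at hh
      subst hh
      exact (Subgroup.mem_center_iff.1 hg) _
  have hCmap : Subgroup.map (QuotientGroup.mk' (Subgroup.center K))
      (Subgroup.centralizer {a ^ 2 ^ ρ}) = ⊤ := by
    rw [eq_top_iff, ← hgen, Subgroup.closure_le]
    rintro _ ⟨i, rfl⟩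
    exact ⟨y i, Subgroup.mem_centralizer_iff.mpr (fun h hh => by
      rw [Set.mem_singleton_iff] at hh; subst hh; exact (key i).eq), rfl⟩
  have hC : Subgroup.centralizer {a ^ 2 ^ ρ} = ⊤ := by
    rw [← Subgroup.comap_map_eq_self hker, hCmap, Subgroup.comap_top]
  rw [Subgroup.mem_center_iff]
  intro g
  have hg : g ∈ Subgroup.centralizer {a ^ 2 ^ ρ} := hC ▸ Subgroup.mem_top g
  exact ((Subgroup.mem_centralizer_iff.1 hg) _ (Set.mem_singleton _)).symm
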